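/- Let $D_m$ be a finite dihedral group and $V$ a complex representation of $D_m$ (possibly infinite-dimensional) such that no nonzero vector $v \in V$ satisfies $r\cdot v = t\cdot v = -v$ (i.e., the sign representation does not occur in $V$). Then the element $C = \sum_{i=0}^{m}(-1)^{m-i}(\text{sum of elements of length }i) \in \mathbb{C}[D_m]$ acts as zero on $V$. -/

import Mathlib

/-- In the dihedral group `D_m` with generators `r := sr 0` and `t := sr 1`,
`(dihWordsGrp m i).1` is the alternating word `r_i = rtr⋯` (`i` factors) and
`(dihWordsGrp m i).2` is `t_i = trt⋯` (`i` factors). -/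
def dihWordsGrp (m : ℕ) : ℕ → DihedralGroup m × DihedralGroup m
  | 0 => (1, 1)
  | i + 1 => (DihedralGroup.sr 0 * (dihWordsGrp m i).2,
      DihedralGroup.sr 1 * (dihWordsGrp m i).1)

open DihedralGroup Finset

lemma dihWordsGrp_spec (m k : ℕ) :
    dihWordsGrp m (2*k) = (r (k : ZMod m), r (-(k : ZMod m))) ∧
    dihWordsGrp m (2*k+1) = (sr (-(k : ZMod m)), sr ((k : ZMod m)+1)) := by
  induction k with
  | zero => simp [dihWordsGrp]
  | succ k ih =>
    obtain ⟨ihe, iho⟩ := ih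
    have he : dihWordsGrp m (2*(k+1)) = (r ((k:ZMod m)+1), r (-((k:ZMod m)+1))) := by
      show dihWordsGrp m ((2*k+1)+1) = _
      rw [dihWordsGrp, iho]
      simp [sr_mul_sr]
      ring_nf
    constructor
    · rw [he]; push_cast; ring_nf
    · have : 2*(k+1)+1 = (2*(k+1))+1 := rfl
      rw [this, dihWordsGrp, he]
      simp [sr_mul_r]
      push_cast
      ring

lemma dihWordsGrp_longest (m : ℕ) : (dihWordsGrp m m).1 = (dihWordsGrp m m).2 := by
  rcases Nat.even_or_odd m with ⟨k, hk⟩ | ⟨k, hk⟩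
  · have := (dihWordsGrp_spec m k).1
    rw [hk, two_mul] at *
    rw [this]
    simp only [Prod.fst, Prod.snd]
    congr 1
    have : ((k + k : ℕ) : ZMod (k+k)) = 0 := ZMod.natCast_self _
    push_cast at this
    linear_combination this
  · have := (dihWordsGrp_spec m k).2
    rw [hk] at *
    rw [this]
    simp only [Prod.fst, Prod.snd]
    congr 1
    have : ((2*k+1 : ℕ) : ZMod (2*k+1)) = 0 := ZMod.natCast_self _
    push_cast at this
    linear_combination -this

lemma tele {S : Type*} [AddCommGroup S] [Module ℂ S] (n : ℕ) (f : ℕ → S) :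
    ∑ j ∈ Finset.range n, (-1:ℂ)^(n-j) • (f j + f (j+1)) = (-1:ℂ)^n • f 0 - f n := by
  have h : ∀ j ∈ Finset.range n, (-1:ℂ)^(n-j) • (f j + f (j+1))
      = (-1:ℂ)^n • (((-1:ℂ)^j • f j) - ((-1:ℂ)^(j+1) • f (j+1))) := by
    intro j hj
    have hjn : j ≤ n := le_of_lt (Finset.mem_range.mp hj)
    obtain ⟨d, rfl⟩ := Nat.exists_eq_add_of_le hjn
    have h1 : j + d - j = d := by omega
    rw [h1, smul_sub, smul_smul, smul_smul, pow_succ]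
    have e1 : (-1:ℂ)^(j+d) * (-1:ℂ)^j = (-1:ℂ)^d := by
      rw [← pow_add]
      have hjd : j + d + j = 2*j + d := by omega
      rw [hjd, pow_add, pow_mul, neg_one_sq, one_pow, one_mul]
    rw [e1]
    have e2 : (-1:ℂ)^(j+d) * ((-1:ℂ)^j * -1) = -(-1:ℂ)^d := by
      rw [← mul_assoc, e1]; ring
    rw [e2, smul_add, neg_smul, sub_neg_eq_add]
  rw [Finset.sum_congr rfl h, ← Finset.smul_sum, Finset.sum_range_sub',
    smul_sub, pow_zero, one_smul, smul_smul, ← pow_add, ← two_mul, pow_mul,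
    neg_one_sq, one_pow, one_smul]

lemma key {S : Type*} [Ring S] [Algebra ℂ S] (n : ℕ)
    (R : S) (A B : ℕ → S)
    (hA0 : A 0 = 1) (hB0 : B 0 = 1)
    (hRB : ∀ i, R * B i = A (i+1))
    (hRA : ∀ i, R * A (i+1) = B i)
    (C : S)
    (hC : C = (-1:ℂ)^(n+1) • 1 + A (n+1) +
      ∑ j ∈ Finset.range n, (-1:ℂ)^(n-j) • (A (j+1) + B (j+1))) :
    R * C = -C := by
  have hR1 : R = A 1 := by rw [← hRB 0, hB0, mul_one]
  rw [hC, mul_add, mul_add, mul_smul_comm, mul_one, Finset.mul_sum]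
  simp only [mul_smul_comm, mul_add, hRA, hRB]
  rw [hR1]
  have hsum : ∑ j ∈ Finset.range n, (-1:ℂ)^(n-j) • (B j + A (j+1+1))
      = ((∑ j ∈ Finset.range n, (-1:ℂ)^(n-j) • (B j + B (j+1)))
        + ∑ j ∈ Finset.range n, (-1:ℂ)^(n-j) • ((fun j => A (j+1)) j + (fun j => A (j+1)) (j+1)))
        - ∑ j ∈ Finset.range n, (-1:ℂ)^(n-j) • (A (j+1) + B (j+1)) := by
    rw [← Finset.sum_add_distrib, ← Finset.sum_sub_distrib]
    apply Finset.sum_congr rfl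
    intro j _
    simp only [smul_add]
    abel
  rw [hsum, tele n B, tele n (fun j => A (j+1)), hB0, pow_succ]
  module

/-- Let `D_m` (`m ≥ 2`) be a finite dihedral group with generators `r = sr 0`, `t = sr 1`,
and let `(V,ρ)` be a complex representation of `D_m` (possibly infinite dimensional) such
that no nonzero `v ∈ V` satisfies `r·v = t·v = -v` (the sign representation does not occur).
Then the element `C = ∑_{i=0}^{m} (-1)^{m-i} (sum of the elements of length i)` of `ℂ[D_m]`
acts as zero on `V`. Here the length-`0` element is `e`, the elements of length `i` for
`1 ≤ i ≤ m-1` are `r_i` and `t_i`, and the unique longest element is `w_{rt} = r_m = t_m`. -/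
theorem C_acts_as_zero (m : ℕ) (hm : 2 ≤ m) (V : Type*) [AddCommGroup V] [Module ℂ V]
    (ρ : Representation ℂ (DihedralGroup m) V)
    (hsign : ∀ v : V, ρ (DihedralGroup.sr 0) v = -v → ρ (DihedralGroup.sr 1) v = -v → v = 0) :
    (-1 : ℂ) ^ m • (1 : Module.End ℂ V) + ρ ((dihWordsGrp m m).1) +
      ∑ i ∈ Finset.Ico 1 m,
        (-1 : ℂ) ^ (m - i) • (ρ ((dihWordsGrp m i).1) + ρ ((dihWordsGrp m i).2)) = 0 := by
  obtain ⟨n, rfl⟩ : ∃ n, m = n + 1 := ⟨m - 1, by omega⟩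
  set A : ℕ → Module.End ℂ V := fun i => ρ ((dihWordsGrp (n+1) i).1) with hAdef
  set B : ℕ → Module.End ℂ V := fun i => ρ ((dihWordsGrp (n+1) i).2) with hBdef
  show (-1:ℂ)^(n+1) • 1 + A (n+1) +
      ∑ i ∈ Finset.Ico 1 (n+1), (-1:ℂ)^(n+1-i) • (A i + B i) = 0
  set C : Module.End ℂ V := (-1:ℂ)^(n+1) • 1 + A (n+1) +
      ∑ i ∈ Finset.Ico 1 (n+1), (-1:ℂ)^(n+1-i) • (A i + B i) with hCdef
  have hA0 : A 0 = 1 := map_one ρ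
  have hB0 : B 0 = 1 := map_one ρ
  have hAB : A (n+1) = B (n+1) := congrArg ρ (dihWordsGrp_longest (n+1))
  have hRB : ∀ i, ρ (sr 0) * B i = A (i+1) := fun i => (map_mul ρ _ _).symm
  have hTA : ∀ i, ρ (sr 1) * A i = B (i+1) := fun i => (map_mul ρ _ _).symm
  have hRR : ρ (sr (0 : ZMod (n+1))) * ρ (sr 0) = 1 := by
    rw [← map_mul, sr_mul_sr, sub_self, ← one_def, map_one]
  have hTT : ρ (sr (1 : ZMod (n+1))) * ρ (sr 1) = 1 := by
    rw [← map_mul, sr_mul_sr, sub_self, ← one_def, map_one]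
  have hRA : ∀ i, ρ (sr 0) * A (i+1) = B i := by
    intro i
    rw [← hRB i, ← mul_assoc, hRR, one_mul]
  have hTB : ∀ i, ρ (sr 1) * B (i+1) = A i := by
    intro i
    rw [← hTA i, ← mul_assoc, hTT, one_mul]
  have hC : C = (-1:ℂ)^(n+1) • 1 + A (n+1) +
      ∑ j ∈ Finset.range n, (-1:ℂ)^(n-j) • (A (j+1) + B (j+1)) := by
    rw [hCdef, Finset.sum_Ico_eq_sum_range]
    congr 1
    apply Finset.sum_congr (by norm_num)
    intro j _
    have h1 : n + 1 - (1 + j) = n - j := by omega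
    have h2 : 1 + j = j + 1 := by omega
    rw [h1, h2]
  have hC' : C = (-1:ℂ)^(n+1) • 1 + B (n+1) +
      ∑ j ∈ Finset.range n, (-1:ℂ)^(n-j) • (B (j+1) + A (j+1)) := by
    rw [hC, hAB]
    congr 1
    apply Finset.sum_congr rfl
    intro j _
    rw [add_comm (A (j+1))]
  have h1 : ρ (sr 0) * C = -C := key n _ A B hA0 hB0 hRB hRA C hC
  have h2 : ρ (sr 1) * C = -C := key n _ B A hB0 hA0 hTA hTB C hC'
  show C = 0
  ext v
  refine hsign (C v) ?_ ?_
  · have := congrArg (fun f : Module.End ℂ V => f v) h1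
    simpa using this
  · have := congrArg (fun f : Module.End ℂ V => f v) h2
    simpa using this
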